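/- Let (Ω, P) be a finite probability space and let d : Ω → [N], Q1 : Ω → [N1], Q2 : Ω → [N2] be random variables such that: d is uniformly distributed on [N]; d and Q1 are independent; Q1 and Q2 are independent; Q2 is uniformly distributed on [N2]; P(Q1 = q1) > 0 for every q1 ∈ [N1]; and for every τ ∈ [N] and every q1 ∈ [N1] the events {d = τ} ∩ {Q1 = q1} and {Q2 ∈ U_{τ|q1}} ∩ {Q1 = q1} coincide. Then the cardinality |U_{τ|q1}| does not depend on q1 nor on τ; in fact N · |U_{τ|q1}| = N2 for every τ ∈ [N] and q1 ∈ [N1]. (Part 1 of the converse theorem: under uniform demand, demand privacy, independent queries, and uniform query distributions, all fibers of the recovery sets have the same size.) -/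

import Mathlib

open Classical in
/-- Probability of the event `E` on a finite probability space with weight
function `p`. -/
noncomputable def pr {Ω : Type*} [Fintype Ω] (p : Ω → ℝ) (E : Ω → Prop) : ℝ :=
  ∑ ω, if E ω then p ω else 0

/-- **Part 1 of the converse theorem.** In a two-server PIR scheme where the
demand `d` is uniform on `Fin N`, the demand is independent of the query `Q1`
to server 1, the two queries `Q1, Q2` are independent, the query `Q2` to
server 2 is uniform on `Fin N2`, every query to server 1 has positive
probability, and for every file index `τ` and query `q1` the event
`{d = τ, Q1 = q1}` coincides with `{Q2 ∈ U_{τ|q1}, Q1 = q1}`, the fiber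
cardinalities `|U_{τ|q1}|` do not depend on `τ` nor on `q1`: in fact
`N * |U_{τ|q1}| = N2` always. -/
theorem pir_converse_part1
    {Ω : Type*} [Fintype Ω] (p : Ω → ℝ)
    (hp : ∀ ω, 0 ≤ p ω) (hp1 : ∑ ω, p ω = 1)
    (N N1 N2 : ℕ) (hN : 0 < N) (hN1 : 0 < N1) (hN2 : 0 < N2)
    (d : Ω → Fin N) (Q1 : Ω → Fin N1) (Q2 : Ω → Fin N2)
    (U : Fin N → Fin N1 → Finset (Fin N2))
    (hdunif : ∀ τ : Fin N, pr p (fun ω => d ω = τ) = 1 / (N : ℝ))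
    (hdQ1 : ∀ (τ : Fin N) (q1 : Fin N1),
      pr p (fun ω => d ω = τ ∧ Q1 ω = q1)
        = pr p (fun ω => d ω = τ) * pr p (fun ω => Q1 ω = q1))
    (hQ1Q2 : ∀ (q1 : Fin N1) (q2 : Fin N2),
      pr p (fun ω => Q1 ω = q1 ∧ Q2 ω = q2)
        = pr p (fun ω => Q1 ω = q1) * pr p (fun ω => Q2 ω = q2))
    (hQ2unif : ∀ q2 : Fin N2, pr p (fun ω => Q2 ω = q2) = 1 / (N2 : ℝ))
    (hQ1pos : ∀ q1 : Fin N1, 0 < pr p (fun ω => Q1 ω = q1))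
    (hevent : ∀ (τ : Fin N) (q1 : Fin N1) (ω : Ω),
      (d ω = τ ∧ Q1 ω = q1) ↔ (Q2 ω ∈ U τ q1 ∧ Q1 ω = q1)) :
    ∀ (τ : Fin N) (q1 : Fin N1), N * (U τ q1).card = N2 := by
  intro τ q1
  classical
  have hcong : pr p (fun ω => d ω = τ ∧ Q1 ω = q1)
      = pr p (fun ω => Q2 ω ∈ U τ q1 ∧ Q1 ω = q1) := by
    unfold pr
    refine Finset.sum_congr rfl fun ω _ => ?_
    by_cases h : d ω = τ ∧ Q1 ω = q1
    · rw [if_pos h, if_pos ((hevent τ q1 ω).mp h)]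
    · rw [if_neg h, if_neg (fun h2 => h ((hevent τ q1 ω).mpr h2))]
  have hsum : pr p (fun ω => Q2 ω ∈ U τ q1 ∧ Q1 ω = q1)
      = ∑ q2 ∈ U τ q1, pr p (fun ω => Q1 ω = q1 ∧ Q2 ω = q2) := by
    unfold pr
    rw [Finset.sum_comm]
    refine Finset.sum_congr rfl fun ω _ => ?_
    by_cases h1 : Q1 ω = q1
    · by_cases h2 : Q2 ω ∈ U τ q1
      · rw [if_pos ⟨h2, h1⟩]
        rw [Finset.sum_eq_single (Q2 ω)]
        · simp [h1]
        · intro b _ hb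
          rw [if_neg]
          rintro ⟨-, h⟩
          exact hb h.symm
        · intro h; exact absurd h2 h
      · rw [if_neg (fun h => h2 h.1)]
        refine (Finset.sum_eq_zero fun b hb => ?_).symm
        rw [if_neg]
        rintro ⟨-, rfl⟩
        exact h2 hb
    · rw [if_neg (fun h => h1 h.2)]
      refine (Finset.sum_eq_zero fun b hb => ?_).symm
      exact if_neg (fun h => h1 h.1)
  have key : (1 / (N : ℝ)) * pr p (fun ω => Q1 ω = q1)
      = pr p (fun ω => Q1 ω = q1) * ((U τ q1).card / (N2 : ℝ)) := by
    have := hdQ1 τ q1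
    rw [hdunif τ] at this
    rw [hcong, hsum] at this
    rw [← this]
    have : ∀ q2 ∈ U τ q1, pr p (fun ω => Q1 ω = q1 ∧ Q2 ω = q2)
        = pr p (fun ω => Q1 ω = q1) * (1 / (N2 : ℝ)) := by
      intro q2 _
      rw [hQ1Q2, hQ2unif]
    rw [Finset.sum_congr rfl this, Finset.sum_const, nsmul_eq_mul]
    ring
  have hpos := hQ1pos q1
  have h2 : (1 / (N : ℝ)) = ((U τ q1).card / (N2 : ℝ)) := by
    refine mul_left_cancel₀ (ne_of_gt hpos) ?_
    rw [← key]; ring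
  have hNne : (N : ℝ) ≠ 0 := Nat.cast_ne_zero.mpr hN.ne'
  have hN2ne : (N2 : ℝ) ≠ 0 := Nat.cast_ne_zero.mpr hN2.ne'
  field_simp at h2
  rw [mul_comm] at h2
  rw [mul_comm]; exact_mod_cast h2.symm
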